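/- Let X ⊆ ℝ^n be nonempty, compact, convex, with 0 ∈ X and diameter at most D. Let S ≥ 1, let g_1, …, g_S ∈ ℝ^n with ‖g_s‖₂ ≤ G for all s, and let η_1, …, η_{S+1} > 0 be arbitrary positive reals (not necessarily monotone). Define the FTRL iterates x̃_s = argmin_{x∈X} {⟨Σ_{l=1}^{s−1} g_l, x⟩ + (1/η_s)‖x‖₂²} for s = 1, …, S+1. Then for every x* ∈ X: Σ_{s=1}^S ⟨g_s, x̃_s − x*⟩ ≤ D²/η_{S+1} + (G²/2)·Σ_{s=1}^S η_s + Σ_{s=1}^S (1/η_s − 1/η_{s+1})·‖x̃_{s+1}‖₂². -/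

import Mathlib

open Finset
open scoped RealInnerProductSpace

set_option maxHeartbeats 1000000 in
/-- FTRL regret bound with arbitrary (possibly non-monotone)
positive learning rates. -/
theorem stmt_18 (n S : ℕ) (hS : 1 ≤ S)
    (X : Set (EuclideanSpace ℝ (Fin n))) (D G : ℝ)
    (hXne : X.Nonempty) (hXcpt : IsCompact X) (hXconv : Convex ℝ X)
    (hX0 : (0 : EuclideanSpace ℝ (Fin n)) ∈ X)
    (hD : ∀ x ∈ X, ∀ y ∈ X, ‖x - y‖ ≤ D)
    (g : ℕ → EuclideanSpace ℝ (Fin n)) (hg : ∀ s ∈ Finset.Icc 1 S, ‖g s‖ ≤ G)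
    (η : ℕ → ℝ) (hη : ∀ s ∈ Finset.Icc 1 (S + 1), 0 < η s)
    (xt : ℕ → EuclideanSpace ℝ (Fin n))
    (hxtX : ∀ s ∈ Finset.Icc 1 (S + 1), xt s ∈ X)
    (hxt : ∀ s ∈ Finset.Icc 1 (S + 1), ∀ p ∈ X,
      ⟪∑ l ∈ Finset.Icc 1 (s - 1), g l, xt s⟫ + (1 / η s) * ‖xt s‖ ^ 2 ≤
        ⟪∑ l ∈ Finset.Icc 1 (s - 1), g l, p⟫ + (1 / η s) * ‖p‖ ^ 2) :
    ∀ xstar ∈ X,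
      ∑ s ∈ Finset.Icc 1 S, ⟪g s, xt s - xstar⟫ ≤
        D ^ 2 / η (S + 1) + (G ^ 2 / 2) * ∑ s ∈ Finset.Icc 1 S, η s +
          ∑ s ∈ Finset.Icc 1 S, (1 / η s - 1 / η (s + 1)) * ‖xt (s + 1)‖ ^ 2 := by
  intro xstar hstar
  obtain ⟨L, hL⟩ : ∃ L : ℕ → EuclideanSpace ℝ (Fin n),
      ∀ s, L s = ∑ l ∈ Finset.Icc 1 s, g l := ⟨_, fun s => rfl⟩
  obtain ⟨A, hA⟩ : ∃ A : ℕ → ℝ,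
      ∀ s, A s = ⟪L (s - 1), xt s⟫ + (1 / η s) * ‖xt s‖ ^ 2 := ⟨_, fun s => rfl⟩
  -- the per-step key inequality
  have key : ∀ s ∈ Finset.Icc 1 S,
      ⟪g s, xt s - xstar⟫ ≤ G ^ 2 / 2 * η s + (A (s + 1) - A s)
        + (1 / η s - 1 / η (s + 1)) * ‖xt (s + 1)‖ ^ 2 - ⟪g s, xstar⟫ := by
    intro s hs
    obtain ⟨hs1, hsS⟩ := Finset.mem_Icc.mp hs
    obtain ⟨t, rfl⟩ : ∃ t, s = t + 1 := ⟨s - 1, (Nat.succ_pred_eq_of_pos hs1).symm⟩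
    have hsmem : t + 1 ∈ Finset.Icc 1 (S + 1) := Finset.mem_Icc.mpr ⟨by omega, by omega⟩
    have hs1mem : t + 2 ∈ Finset.Icc 1 (S + 1) := Finset.mem_Icc.mpr ⟨by omega, by omega⟩
    have he : 0 < η (t + 1) := hη _ hsmem
    have hne : η (t + 1) ≠ 0 := he.ne'
    have he' : 0 < η (t + 2) := hη _ hs1mem
    have ha : xt (t + 1) ∈ X := hxtX _ hsmem
    have hb : xt (t + 2) ∈ X := hxtX _ hs1mem
    set a := xt (t + 1) with hadef
    set b := xt (t + 2) with hbdef
    -- midpoint belongs to X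
    have hm : (1 / 2 : ℝ) • a + (1 / 2 : ℝ) • b ∈ X :=
      hXconv ha hb (by norm_num) (by norm_num) (by norm_num)
    have hi' := hxt (t + 1) hsmem _ hm
    simp only [Nat.add_sub_cancel, ← hL] at hi'
    have h1 : ⟪L t, (1 / 2 : ℝ) • a + (1 / 2 : ℝ) • b⟫
        = 1 / 2 * ⟪L t, a⟫ + 1 / 2 * ⟪L t, b⟫ := by
      rw [inner_add_right, real_inner_smul_right, real_inner_smul_right]
    have h2 : ‖(1 / 2 : ℝ) • a + (1 / 2 : ℝ) • b‖ ^ 2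
        = 1 / 4 * (‖a‖ ^ 2 + 2 * ⟪a, b⟫ + ‖b‖ ^ 2) := by
      rw [← smul_add, norm_smul, Real.norm_eq_abs, mul_pow, norm_add_sq_real]
      norm_num
    have h3 : ‖a - b‖ ^ 2 = ‖a‖ ^ 2 - 2 * ⟪a, b⟫ + ‖b‖ ^ 2 := norm_sub_sq_real a b
    rw [h1, h2] at hi'
    -- multiply the optimality inequality by η (t+1) to clear denominators
    have hcancel : ∀ x : ℝ, η (t + 1) * (1 / η (t + 1) * x) = x := fun x => by
      field_simp
    have hi2 := mul_le_mul_of_nonneg_left hi' he.le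
    rw [mul_add, mul_add, mul_add, hcancel, hcancel] at hi2
    -- strong convexity consequence (scaled by η (t+1))
    have hii : η (t + 1) * ⟪L t, a⟫ + ‖a‖ ^ 2 + ‖a - b‖ ^ 2 / 2
        ≤ η (t + 1) * ⟪L t, b⟫ + ‖b‖ ^ 2 := by nlinarith [hi2, h3]
    -- Cauchy-Schwarz + AM-GM (scaled by η (t+1))
    have hgab : (⟪g (t + 1), a - b⟫ : ℝ) = ⟪g (t + 1), a⟫ - ⟪g (t + 1), b⟫ :=
      inner_sub_right _ _ _
    have h4 : (⟪g (t + 1), a - b⟫ : ℝ) ≤ G * ‖a - b‖ :=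
      le_trans (real_inner_le_norm _ _)
        (mul_le_mul_of_nonneg_right (hg _ hs) (norm_nonneg _))
    have hCS : η (t + 1) * ⟪g (t + 1), a⟫ - η (t + 1) * ⟪g (t + 1), b⟫
        ≤ G ^ 2 / 2 * η (t + 1) ^ 2 + ‖a - b‖ ^ 2 / 2 := by
      have h5 := mul_le_mul_of_nonneg_left h4 he.le
      rw [hgab] at h5
      nlinarith [sq_nonneg (η (t + 1) * G - ‖a - b‖), h5]
    -- combine (still scaled)
    have keystep : η (t + 1) * ⟪g (t + 1), a⟫ ≤ G ^ 2 / 2 * η (t + 1) ^ 2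
        + η (t + 1) * ⟪L t, b⟫ + η (t + 1) * ⟪g (t + 1), b⟫
        - η (t + 1) * ⟪L t, a⟫ - ‖a‖ ^ 2 + ‖b‖ ^ 2 := by linarith [hii, hCS]
    -- unscale
    have hfinal : (⟪g (t + 1), a⟫ : ℝ) ≤ G ^ 2 / 2 * η (t + 1)
        + ⟪L t, b⟫ + ⟪g (t + 1), b⟫ - ⟪L t, a⟫
        - (1 / η (t + 1)) * ‖a‖ ^ 2 + (1 / η (t + 1)) * ‖b‖ ^ 2 := by
      have hd : (⟪g (t + 1), a⟫ : ℝ)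
          - (G ^ 2 / 2 * η (t + 1) + ⟪L t, b⟫ + ⟪g (t + 1), b⟫ - ⟪L t, a⟫)
          ≤ (‖b‖ ^ 2 - ‖a‖ ^ 2) / η (t + 1) := by
        rw [le_div_iff₀ he]
        nlinarith [keystep]
      have hb2 : (1 / η (t + 1)) * ‖b‖ ^ 2 - (1 / η (t + 1)) * ‖a‖ ^ 2
          = (‖b‖ ^ 2 - ‖a‖ ^ 2) / η (t + 1) := by ring
      linarith [hd, hb2]
    -- rewrite goal in terms of atoms
    have hAs : A (t + 1) = ⟪L t, a⟫ + (1 / η (t + 1)) * ‖a‖ ^ 2 := by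
      rw [hA]
      simp only [Nat.add_sub_cancel, ← hadef]
    have hLs1 : L (t + 1) = L t + g (t + 1) := by
      rw [hL, hL]
      exact Finset.sum_Icc_succ_top (by omega) g
    have hAs1 : A (t + 1 + 1) = ⟪L t, b⟫ + ⟪g (t + 1), b⟫ + (1 / η (t + 2)) * ‖b‖ ^ 2 := by
      rw [hA]
      simp only [Nat.add_sub_cancel]
      rw [hLs1, inner_add_left]
    have hga : (⟪g (t + 1), a - xstar⟫ : ℝ) = ⟪g (t + 1), a⟫ - ⟪g (t + 1), xstar⟫ :=
      inner_sub_right _ _ _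
    rw [hga, hAs, hAs1, show (1 / η (t + 1) - 1 / η (t + 1 + 1)) * ‖b‖ ^ 2
      = (1 / η (t + 1)) * ‖b‖ ^ 2 - (1 / η (t + 2)) * ‖b‖ ^ 2 by norm_num; ring]
    have heq : η (t + 1 + 1) = η (t + 2) := by norm_num
    linarith [hfinal]
  -- sum up
  have hsum := Finset.sum_le_sum key
  -- telescoping
  have htel : ∑ s ∈ Finset.Icc 1 S, (A (s + 1) - A s) = A (S + 1) - A 1 := by
    have h := Finset.sum_range_sub (fun i => A (i + 1)) S
    rw [← Finset.Ico_add_one_right_eq_Icc, Finset.sum_Ico_eq_sum_range]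
    simp only [Nat.add_sub_cancel]
    have hcomm : ∀ i ∈ Finset.range S, A (1 + i + 1) - A (1 + i) = A (i + 1 + 1) - A (i + 1) := by
      intro i _; rw [add_comm 1 i]
    rw [Finset.sum_congr rfl hcomm]
    simpa using h
  have hgsum : ∑ s ∈ Finset.Icc 1 S, (⟪g s, xstar⟫ : ℝ) = ⟪L S, xstar⟫ := by
    rw [hL]
    exact (sum_inner _ _ _).symm
  have hsplit : ∑ s ∈ Finset.Icc 1 S, (G ^ 2 / 2 * η s + (A (s + 1) - A s)
        + (1 / η s - 1 / η (s + 1)) * ‖xt (s + 1)‖ ^ 2 - ⟪g s, xstar⟫)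
      = G ^ 2 / 2 * ∑ s ∈ Finset.Icc 1 S, η s + (A (S + 1) - A 1)
        + ∑ s ∈ Finset.Icc 1 S, (1 / η s - 1 / η (s + 1)) * ‖xt (s + 1)‖ ^ 2
        - ⟪L S, xstar⟫ := by
    rw [Finset.sum_sub_distrib, Finset.sum_add_distrib, Finset.sum_add_distrib,
      Finset.mul_sum, htel, hgsum]
  rw [hsplit] at hsum
  -- final bounds
  have hS1mem : S + 1 ∈ Finset.Icc 1 (S + 1) := Finset.mem_Icc.mpr ⟨by omega, le_refl _⟩
  have heS : 0 < η (S + 1) := hη _ hS1mem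
  have hAS1 : A (S + 1) ≤ ⟪L S, xstar⟫ + (1 / η (S + 1)) * ‖xstar‖ ^ 2 := by
    have h := hxt (S + 1) hS1mem xstar hstar
    simp only [Nat.add_sub_cancel, ← hL] at h
    rw [hA]
    simpa only [Nat.add_sub_cancel] using h
  have hA1 : 0 ≤ A 1 := by
    have h1 : 0 < η 1 := hη 1 (Finset.mem_Icc.mpr ⟨le_refl _, by omega⟩)
    have hA1eq : A 1 = (1 / η 1) * ‖xt 1‖ ^ 2 := by
      rw [hA]
      simp [hL]
    rw [hA1eq]; positivity
  have hxsD : ‖xstar‖ ≤ D := by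
    have := hD xstar hstar 0 hX0
    simpa using this
  have hxs2 : ‖xstar‖ ^ 2 ≤ D ^ 2 := by
    have h0 : (0:ℝ) ≤ ‖xstar‖ := norm_nonneg _
    nlinarith
  have hfin : (1 / η (S + 1)) * ‖xstar‖ ^ 2 ≤ D ^ 2 / η (S + 1) := by
    rw [div_eq_mul_one_div (D ^ 2) (η (S + 1)), mul_comm (D ^ 2)]
    exact mul_le_mul_of_nonneg_left hxs2 (by positivity)
  linarith [hsum, hAS1, hA1, hfin]
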